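/- In the planar-face configuration, the following identity holds unconditionally: ∏_{i=1}^n (1−t_i)/t_i = (−1)^n · ∏_{i=1}^n (a_i,v_i,w_i)/(a_{i−1},v_i,w_i). -/

import Mathlib

open Matrix

/-- The scalar triple product `(a, b, c) = ⟨a, [b, c]⟩` in `ℝ³`. -/
noncomputable def tripleProd (a b c : Fin 3 → ℝ) : ℝ := a ⬝ᵥ crossProduct b c

lemma tp_expand (a b c : Fin 3 → ℝ) :
    tripleProd a b c = a 0 * (b 1 * c 2 - b 2 * c 1) - a 1 * (b 0 * c 2 - b 2 * c 0)
      + a 2 * (b 0 * c 1 - b 1 * c 0) := by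
  simp [tripleProd, crossProduct, dotProduct, Fin.sum_univ_three]
  ring

lemma quad (p q r s v w : Fin 3 → ℝ) :
    tripleProd q r s * tripleProd p v w - tripleProd p r s * tripleProd q v w
      + tripleProd p q s * tripleProd r v w - tripleProd p q r * tripleProd s v w = 0 := by
  simp only [tp_expand]; ring

lemma perp3 (x y z ν : Fin 3 → ℝ) (hν : ν ≠ 0) (hx : ν ⬝ᵥ x = 0) (hy : ν ⬝ᵥ y = 0)
    (hz : ν ⬝ᵥ z = 0) : tripleProd x y z = 0 := by
  have hid : tripleProd x y z * (ν ⬝ᵥ ν) =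
      (ν ⬝ᵥ x) * tripleProd ν y z + (ν ⬝ᵥ y) * tripleProd x ν z + (ν ⬝ᵥ z) * tripleProd x y ν := by
    simp only [tp_expand, dotProduct, Fin.sum_univ_three]; ring
  have hνν : ν ⬝ᵥ ν ≠ 0 := by
    simpa using (dotProduct_self_eq_zero (v := ν)).not.mpr hν
  rw [hx, hy, hz] at hid
  simp only [zero_mul, add_zero] at hid
  exact (mul_eq_zero.mp hid).resolve_right hνν

lemma tp_comb (c d : ℝ) (x y v w : Fin 3 → ℝ) :
    tripleProd (c • x + d • y) v w = c * tripleProd x v w + d * tripleProd y v w := by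
  simp only [tp_expand, Pi.add_apply, Pi.smul_apply, smul_eq_mul]; ring

lemma tp_smul (c : ℝ) (x v w : Fin 3 → ℝ) :
    tripleProd (c • x) v w = c * tripleProd x v w := by
  simp only [tp_expand, Pi.smul_apply, smul_eq_mul]; ring

lemma tp_swap12 (x y z : Fin 3 → ℝ) : tripleProd x y z = -tripleProd y x z := by
  simp only [tp_expand]; ring

lemma tp_self (x z : Fin 3 → ℝ) : tripleProd x x z = 0 := by
  simp only [tp_expand]; ring

lemma tp_span (x v w : Fin 3 → ℝ) (hx : x ∈ Submodule.span ℝ ({v, w} : Set (Fin 3 → ℝ))) :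
    tripleProd x v w = 0 := by
  rw [Submodule.mem_span_pair] at hx
  obtain ⟨c, d, rfl⟩ := hx
  simp only [tp_expand, Pi.add_apply, Pi.smul_apply, smul_eq_mul]; ring

/-- If `u, x ⊥ ν`, `(u,x,ν) = 0`, `u ≠ 0`, `ν ≠ 0`, and `(u,v,w) = 0`, then `(x,v,w) = 0`
(indeed `x` is then a multiple of `u`). -/
lemma tp_parallel (u x ν v w : Fin 3 → ℝ) (hν : ν ≠ 0) (hu : u ≠ 0)
    (hνu : ν ⬝ᵥ u = 0) (hνx : ν ⬝ᵥ x = 0) (huxν : tripleProd u x ν = 0)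
    (huvw : tripleProd u v w = 0) : tripleProd x v w = 0 := by
  have hνν : ν ⬝ᵥ ν ≠ 0 := by
    simpa using (dotProduct_self_eq_zero (v := ν)).not.mpr hν
  have huu : u ⬝ᵥ u ≠ 0 := by
    simpa using (dotProduct_self_eq_zero (v := u)).not.mpr hu
  -- step 1:  x ×₃ u = 0
  have step1 : crossProduct x u = 0 := by
    have hxuν : tripleProd x u ν = 0 := by rw [tp_swap12, huxν, neg_zero]
    funext j
    have hid : (ν ⬝ᵥ ν) * (crossProduct x u) j
        = tripleProd x u ν * ν j + (ν ⬝ᵥ x) * (crossProduct ν u) j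
          - (ν ⬝ᵥ u) * (crossProduct ν x) j := by
      fin_cases j <;>
        · simp [tp_expand, crossProduct, dotProduct, Fin.sum_univ_three]
          ring
    rw [hxuν, hνx, hνu] at hid
    simp only [zero_mul, mul_zero, add_zero, sub_zero, zero_add] at hid
    have := (mul_eq_zero.mp hid).resolve_left hνν
    simpa using this
  -- step 2:  (u ⬝ᵥ u) • x = (u ⬝ᵥ x) • u
  have step2 : (u ⬝ᵥ u) • x = (u ⬝ᵥ x) • u := by
    funext j
    have hid : (u ⬝ᵥ u) * x j - (u ⬝ᵥ x) * u j
        = (crossProduct u (crossProduct x u)) j := by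
      fin_cases j <;>
        · simp [crossProduct, dotProduct, Fin.sum_univ_three]
          ring
    rw [step1] at hid
    simp only [map_zero, LinearMap.zero_apply, Pi.zero_apply] at hid
    have := sub_eq_zero.mp hid
    simpa using this
  have : (u ⬝ᵥ u) * tripleProd x v w = (u ⬝ᵥ x) * tripleProd u v w := by
    rw [← tp_smul, step2, tp_smul]
  rw [huvw, mul_zero] at this
  exact (mul_eq_zero.mp this).resolve_left huu

/-- **Generalized Ceva–Menelaus identity.**  For a Kokotsakis mesh with planar faces,
with `Aᵢ = tᵢ B_{i-1} + (1 - tᵢ) Bᵢ`, one has unconditionally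
`∏ᵢ (1 - tᵢ)/tᵢ = (-1)ⁿ ∏ᵢ (aᵢ, vᵢ, wᵢ)/(a_{i-1}, vᵢ, wᵢ)`. -/
theorem stmt2 (n : ℕ) [NeZero n] (hn : 3 ≤ n)
    (A B v w : ZMod n → (Fin 3 → ℝ)) (t : ZMod n → ℝ)
    (a : ZMod n → (Fin 3 → ℝ)) (ha : ∀ i, a i = A (i + 1) - A i)
    -- all the points `Aᵢ`, `Bᵢ` lie in a common affine plane `π = {x | ⟨ν, x⟩ = d}`
    (ν : Fin 3 → ℝ) (d : ℝ) (hν : ν ≠ 0)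
    (hAπ : ∀ i, ν ⬝ᵥ A i = d) (hBπ : ∀ i, ν ⬝ᵥ B i = d)
    (hvw : ∀ i, LinearIndependent ℝ ![v i, w i])
    (hprev : ∀ i, tripleProd (a (i - 1)) (v i) (w i) ≠ 0)
    (hnext : ∀ i, tripleProd (a i) (v i) (w i) ≠ 0)
    (hBv0 : ∀ i, B (i - 1) - A i ≠ 0) (hBv1 : ∀ i, B i - A i ≠ 0)
    (hBs0 : ∀ i, B (i - 1) - A i ∈ Submodule.span ℝ ({v i, w i} : Set (Fin 3 → ℝ)))
    (hBs1 : ∀ i, B i - A i ∈ Submodule.span ℝ ({v i, w i} : Set (Fin 3 → ℝ)))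
    (hBB : ∀ i, B (i - 1) ≠ B i)
    (ht0 : ∀ i, t i ≠ 0) (ht1 : ∀ i, t i ≠ 1)
    (hAt : ∀ i, A i = t i • B (i - 1) + (1 - t i) • B i) :
    ∏ i : ZMod n, (1 - t i) / t i =
      (-1 : ℝ) ^ n *
        ∏ i : ZMod n, tripleProd (a i) (v i) (w i) / tripleProd (a (i - 1)) (v i) (w i) := by
  classical
  set e : ZMod n → (Fin 3 → ℝ) := fun i => B i - B (i - 1) with he_def
  set D : ZMod n → ℝ := fun i => tripleProd (e i) (e (i + 1)) ν with hD_def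
  -- basic facts
  have he0 : ∀ i, e i ≠ 0 := fun i => sub_ne_zero.mpr (hBB i).symm
  have hνe : ∀ i, ν ⬝ᵥ e i = 0 := by
    intro i; simp [he_def, dotProduct_sub, hBπ]
  have hνa : ∀ i, ν ⬝ᵥ a i = 0 := by
    intro i; rw [ha]; simp [dotProduct_sub, hAπ]
  have he_vw : ∀ i, tripleProd (e i) (v i) (w i) = 0 := by
    intro i
    have he_eq : e i = (B i - A i) - (B (i - 1) - A i) := by
      simp only [he_def]; abel
    exact tp_span _ _ _ (he_eq ▸ Submodule.sub_mem _ (hBs1 i) (hBs0 i))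
  have ha_e : ∀ i, a i = (1 - t (i + 1)) • e (i + 1) + t i • e i := by
    intro i
    have h1 : e (i + 1) = B (i + 1) - B i := by
      simp only [he_def, add_sub_cancel_right]
    rw [ha i, hAt (i + 1), hAt i, h1]
    simp only [he_def, add_sub_cancel_right]
    module
  have hD0 : ∀ i, D i ≠ 0 := by
    intro i hDi
    refine hnext i ?_
    have h1 : tripleProd (e (i + 1)) (v i) (w i) = 0 :=
      tp_parallel (e i) (e (i + 1)) ν (v i) (w i) hν (he0 i) (hνe i) (hνe (i + 1)) hDi
        (he_vw i)
    rw [ha_e i, tp_comb, h1, he_vw i]; ring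
  have comp1 : ∀ i, tripleProd (a i) (e i) ν = -((1 - t (i + 1)) * D i) := by
    intro i
    rw [ha_e i, tp_comb, tp_self, tp_swap12 (e (i + 1)) (e i) ν]
    simp only [hD_def]; ring
  have comp2 : ∀ i, tripleProd (a (i - 1)) (e i) ν = t (i - 1) * D (i - 1) := by
    intro i
    have h := ha_e (i - 1)
    rw [sub_add_cancel] at h
    rw [h, tp_comb, tp_self]
    simp only [hD_def, sub_add_cancel]; ring
  have key : ∀ i, tripleProd (a i) (v i) (w i) * (t (i - 1) * D (i - 1)) =
      (-((1 - t (i + 1)) * D i)) * tripleProd (a (i - 1)) (v i) (w i) := by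
    intro i
    have hq := quad (a i) (a (i - 1)) (e i) ν (v i) (w i)
    rw [he_vw i, perp3 (a i) (a (i - 1)) (e i) ν hν (hνa i) (hνa (i - 1)) (hνe i),
      comp1 i, comp2 i] at hq
    linarith [hq]
  -- rewrite each ratio
  have hterm : ∀ i, tripleProd (a i) (v i) (w i) / tripleProd (a (i - 1)) (v i) (w i) =
      (-((1 - t (i + 1)) * D i)) / (t (i - 1) * D (i - 1)) := by
    intro i
    rw [div_eq_div_iff (hprev i) (mul_ne_zero (ht0 (i - 1)) (hD0 (i - 1)))]
    linarith [key i]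
  rw [Finset.prod_congr rfl (fun i _ => hterm i)]
  have hcard : (Finset.univ : Finset (ZMod n)).card = n := by
    simp [ZMod.card]
  -- split the product
  rw [Finset.prod_div_distrib]
  have hnum : (∏ i : ZMod n, -((1 - t (i + 1)) * D i)) =
      (-1 : ℝ) ^ n * ((∏ i : ZMod n, (1 - t i)) * ∏ i : ZMod n, D i) := by
    calc (∏ i : ZMod n, -((1 - t (i + 1)) * D i))
        = ∏ i : ZMod n, (-1 : ℝ) * ((1 - t (i + 1)) * D i) := by
          refine Finset.prod_congr rfl fun i _ => by ring
      _ = (-1 : ℝ) ^ n * ∏ i : ZMod n, (1 - t (i + 1)) * D i := by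
          rw [Finset.prod_mul_distrib, Finset.prod_const, hcard]
      _ = (-1 : ℝ) ^ n * ((∏ i : ZMod n, (1 - t (i + 1))) * ∏ i : ZMod n, D i) := by
          rw [Finset.prod_mul_distrib]
      _ = (-1 : ℝ) ^ n * ((∏ i : ZMod n, (1 - t i)) * ∏ i : ZMod n, D i) := by
          rw [Fintype.prod_equiv (Equiv.addRight (1 : ZMod n)) (fun i => 1 - t (i + 1))
            (fun i => 1 - t i) (fun i => rfl)]
  have hden : (∏ i : ZMod n, t (i - 1) * D (i - 1)) =
      (∏ i : ZMod n, t i) * ∏ i : ZMod n, D i := by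
    rw [Finset.prod_mul_distrib,
      Fintype.prod_equiv (Equiv.subRight (1 : ZMod n)) (fun i => t (i - 1))
        (fun i => t i) (fun i => rfl),
      Fintype.prod_equiv (Equiv.subRight (1 : ZMod n)) (fun i => D (i - 1))
        (fun i => D i) (fun i => rfl)]
  rw [Finset.prod_div_distrib, hnum, hden]
  have hTt : (∏ i : ZMod n, t i) ≠ 0 := Finset.prod_ne_zero_iff.mpr fun i _ => ht0 i
  have hPD : (∏ i : ZMod n, D i) ≠ 0 := Finset.prod_ne_zero_iff.mpr fun i _ => hD0 i
  have hsq : ((-1 : ℝ)) ^ n * (-1 : ℝ) ^ n = 1 := by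
    rw [← mul_pow]; norm_num
  field_simp
  have hs2 : (-1 : ℝ) ^ (n * 2) = 1 := by rw [mul_comm, pow_mul]; norm_num
  linear_combination (-(∏ i : ZMod n, (1 - t i))) * hs2
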